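/- arXiv:1308.4557 — 5 statements merged into one kernel-verified Lean document; each statement's English description precedes it below -/
import Mathlib

section
/- Objects (X, ∼) and (Y, ≈) of Split†[Rel] are isomorphic if and only if the quotient sets Dom(∼)/∼ and Dom(≈)/≈ have the same cardinality (are in bijection). -/
/-- The domain of a partial equivalence relation. -/
def PerDom {X : Type*} (r : X → X → Prop) : Type _ := {x : X // r x x}

/-- The quotient `Dom(∼)/∼`. -/
def PerQuot {X : Type*} (r : X → X → Prop) : Type _ :=
  Quot (fun a b : PerDom r => r a.val b.val)

/-- Objects `(X, ∼)` and `(Y, ≈)` of `Split†[Rel]` (pairs of a set with a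
partial equivalence relation; morphisms `(X,∼) → (Y,≈)` are relations `R` with
`R = ≈ ∘ R ∘ ∼`; the identity on `(X,∼)` is `∼` itself) are isomorphic iff the
quotients `Dom(∼)/∼` and `Dom(≈)/≈` are in bijection. -/
theorem stmt4 {X Y : Type*} (r : X → X → Prop) (s : Y → Y → Prop)
    (hr : Symmetric r ∧ Transitive r) (hs : Symmetric s ∧ Transitive s) :
    (∃ (R : Rel X Y) (S : Rel Y X),
      Relation.Comp (r : Rel X X) (Relation.Comp R (s : Rel Y Y)) = R ∧
      Relation.Comp (s : Rel Y Y) (Relation.Comp S (r : Rel X X)) = S ∧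
      Relation.Comp R S = (r : Rel X X) ∧
      Relation.Comp S R = (s : Rel Y Y)) ↔
    Nonempty (PerQuot r ≃ PerQuot s) := by
  obtain ⟨hrs, hrt⟩ := hr
  obtain ⟨hss, hst⟩ := hs
  -- characterization of equality in the quotients
  have quot_eq_r : ∀ a b : PerDom r,
      (Quot.mk (fun a b : PerDom r => r a.val b.val) a
        = Quot.mk (fun a b : PerDom r => r a.val b.val) b) → r a.val b.val := by
    intro a b h
    have := congrArg (Quot.lift (fun c : PerDom r => r a.val c.val)
      (fun c d hcd => propext ⟨fun h' => hrt h' hcd, fun h' => hrt h' (hrs hcd)⟩)) h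
    exact this.mp a.2
  have quot_eq_s : ∀ a b : PerDom s,
      (Quot.mk (fun a b : PerDom s => s a.val b.val) a
        = Quot.mk (fun a b : PerDom s => s a.val b.val) b) → s a.val b.val := by
    intro a b h
    have := congrArg (Quot.lift (fun c : PerDom s => s a.val c.val)
      (fun c d hcd => propext ⟨fun h' => hst h' hcd, fun h' => hst h' (hss hcd)⟩)) h
    exact this.mp a.2
  constructor
  · rintro ⟨R, S, hR, hS, hRS, hSR⟩
    have hR' : ∀ x y, R x y ↔ ∃ a, r x a ∧ ∃ b, R a b ∧ s b y := fun x y =>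
      (iff_of_eq (congrFun (congrFun hR x) y)).symm
    have hS' : ∀ y x, S y x ↔ ∃ b, s y b ∧ ∃ a, S b a ∧ r a x := fun y x =>
      (iff_of_eq (congrFun (congrFun hS y) x)).symm
    have hRS' : ∀ x x', r x x' ↔ ∃ y, R x y ∧ S y x' := fun x x' =>
      (iff_of_eq (congrFun (congrFun hRS x) x')).symm
    have hSR' : ∀ y y', s y y' ↔ ∃ x, S y x ∧ R x y' := fun y y' =>
      (iff_of_eq (congrFun (congrFun hSR y) y')).symm
    -- key lemmas
    have keyA : ∀ x y, r x x → R x y → S y x := by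
      intro x y hx hxy
      obtain ⟨y₀, hxy₀, hy₀x⟩ := (hRS' x x).mp hx
      have hs0 : s y₀ y := (hSR' y₀ y).mpr ⟨x, hy₀x, hxy⟩
      exact (hS' y x).mpr ⟨y₀, hss hs0, x, hy₀x, hx⟩
    have keyB : ∀ y x, s y y → S y x → R x y := by
      intro y x hy hyx
      obtain ⟨x₀, hyx₀, hx₀y⟩ := (hSR' y y).mp hy
      have hr0 : r x₀ x := (hRS' x₀ x).mpr ⟨y, hx₀y, hyx⟩
      exact (hR' x y).mpr ⟨x₀, hrs hr0, y, hx₀y, hy⟩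
    have respR : ∀ x x' y y', r x x' → R x y → R x' y' → s y y' := by
      intro x x' y y' hxx' hxy hx'y'
      have hx : r x x := hrt hxx' (hrs hxx')
      have hx' : r x' x' := hrt (hrs hxx') hxx'
      have hSyx : S y x := keyA x y hx hxy
      have hSy'x' : S y' x' := keyA x' y' hx' hx'y'
      have hy' : s y' y' := (hSR' y' y').mpr ⟨x', hSy'x', hx'y'⟩
      have hxy' : R x y' := (hR' x y').mpr ⟨x', hxx', y', hx'y', hy'⟩
      exact (hSR' y y').mpr ⟨x, hSyx, hxy'⟩
    have respS : ∀ y y' x x', s y y' → S y x → S y' x' → r x x' := by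
      intro y y' x x' hyy' hyx hy'x'
      have hy : s y y := hst hyy' (hss hyy')
      have hy' : s y' y' := hst (hss hyy') hyy'
      have hRxy : R x y := keyB y x hy hyx
      have hRx'y' : R x' y' := keyB y' x' hy' hy'x'
      have hx' : r x' x' := (hRS' x' x').mpr ⟨y', hRx'y', hy'x'⟩
      have hyx' : S y x' := (hS' y x').mpr ⟨y', hyy', x', hy'x', hx'⟩
      exact (hRS' x x').mpr ⟨y, hRxy, hyx'⟩
    -- the maps
    have exF : ∀ a : PerDom r, ∃ b : PerDom s, R a.val b.val ∧ S b.val a.val := by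
      intro a
      obtain ⟨y, h1, h2⟩ := (hRS' a.val a.val).mp a.2
      exact ⟨⟨y, (hSR' y y).mpr ⟨a.val, h2, h1⟩⟩, h1, h2⟩
    have exG : ∀ b : PerDom s, ∃ a : PerDom r, S b.val a.val ∧ R a.val b.val := by
      intro b
      obtain ⟨x, h1, h2⟩ := (hSR' b.val b.val).mp b.2
      exact ⟨⟨x, (hRS' x x).mpr ⟨b.val, h2, h1⟩⟩, h1, h2⟩
    let f : PerQuot r → PerQuot s := Quot.lift
      (fun a => Quot.mk _ (Classical.choose (exF a))) (by
        intro a b hab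
        exact Quot.sound (respR a.val b.val _ _ hab
          (Classical.choose_spec (exF a)).1 (Classical.choose_spec (exF b)).1))
    refine ⟨Equiv.ofBijective f ⟨?_, ?_⟩⟩
    · intro q1 q2 h
      refine Quot.induction_on₂ q1 q2 (fun a b h => ?_) h
      have hsab : s (Classical.choose (exF a)).val (Classical.choose (exF b)).val :=
        quot_eq_s (Classical.choose (exF a)) (Classical.choose (exF b)) h
      exact Quot.sound (respS _ _ a.val b.val hsab
        (Classical.choose_spec (exF a)).2 (Classical.choose_spec (exF b)).2)
    · intro q
      refine Quot.induction_on q (fun b => ?_)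
      refine ⟨Quot.mk _ (Classical.choose (exG b)), ?_⟩
      have h1 := Classical.choose_spec (exG b)
      have h2 := Classical.choose_spec (exF (Classical.choose (exG b)))
      exact Quot.sound (respR (Classical.choose (exG b)).val
        (Classical.choose (exG b)).val _ b.val (Classical.choose (exG b)).2 h2.1 h1.2)
  · rintro ⟨e⟩
    set R : Rel X Y := fun x y => ∃ (hx : r x x) (hy : s y y),
      e (Quot.mk _ ⟨x, hx⟩) = Quot.mk _ ⟨y, hy⟩ with hRdef
    set S : Rel Y X := fun y x => ∃ (hx : r x x) (hy : s y y),
      e (Quot.mk _ ⟨x, hx⟩) = Quot.mk _ ⟨y, hy⟩ with hSdef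
    refine ⟨R, S, ?_, ?_, ?_, ?_⟩
    · funext x y
      apply propext
      show (∃ a, r x a ∧ ∃ b, R a b ∧ s b y) ↔ R x y
      constructor
      · rintro ⟨a, hxa, b, ⟨ha, hb, heq⟩, hby⟩
        have hx : r x x := hrt hxa (hrs hxa)
        have hy : s y y := hst (hss hby) hby
        refine ⟨hx, hy, ?_⟩
        have e1 : (Quot.mk _ (⟨x, hx⟩ : PerDom r) : PerQuot r) = Quot.mk _ ⟨a, ha⟩ :=
          Quot.sound hxa
        have e2 : (Quot.mk _ (⟨b, hb⟩ : PerDom s) : PerQuot s) = Quot.mk _ ⟨y, hy⟩ :=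
          Quot.sound hby
        rw [e1, heq, e2]
      · rintro ⟨hx, hy, heq⟩
        exact ⟨x, hx, y, ⟨hx, hy, heq⟩, hy⟩
    · funext y x
      apply propext
      show (∃ b, s y b ∧ ∃ a, S b a ∧ r a x) ↔ S y x
      constructor
      · rintro ⟨b, hyb, a, ⟨ha, hb, heq⟩, hax⟩
        have hy : s y y := hst hyb (hss hyb)
        have hx : r x x := hrt (hrs hax) hax
        refine ⟨hx, hy, ?_⟩
        have e1 : (Quot.mk _ (⟨x, hx⟩ : PerDom r) : PerQuot r) = Quot.mk _ ⟨a, ha⟩ :=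
          Quot.sound (hrs hax)
        have e2 : (Quot.mk _ (⟨b, hb⟩ : PerDom s) : PerQuot s) = Quot.mk _ ⟨y, hy⟩ :=
          Quot.sound (hss hyb)
        rw [e1, heq, e2]
      · rintro ⟨hx, hy, heq⟩
        exact ⟨y, hy, x, ⟨hx, hy, heq⟩, hx⟩
    · funext x x'
      apply propext
      show (∃ y, R x y ∧ S y x') ↔ r x x'
      constructor
      · rintro ⟨y, ⟨hx, hy, heq⟩, ⟨hx', hy', heq'⟩⟩
        have : e (Quot.mk _ ⟨x, hx⟩) = e (Quot.mk _ ⟨x', hx'⟩) := by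
          rw [heq, heq']
        exact quot_eq_r ⟨x, hx⟩ ⟨x', hx'⟩ (e.injective this)
      · intro hxx'
        have hx : r x x := hrt hxx' (hrs hxx')
        have hx' : r x' x' := hrt (hrs hxx') hxx'
        obtain ⟨b, hb⟩ := Quot.exists_rep (e (Quot.mk _ ⟨x, hx⟩))
        refine ⟨b.val, ⟨hx, b.2, ?_⟩, ⟨hx', b.2, ?_⟩⟩
        · exact hb.symm
        · have : (Quot.mk _ (⟨x', hx'⟩ : PerDom r) : PerQuot r) = Quot.mk _ ⟨x, hx⟩ :=
            Quot.sound (hrs hxx')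
          rw [this]
          exact hb.symm
    · funext y y'
      apply propext
      show (∃ x, S y x ∧ R x y') ↔ s y y'
      constructor
      · rintro ⟨x, ⟨hx, hy, heq⟩, ⟨hx', hy', heq'⟩⟩
        have : (Quot.mk _ (⟨y, hy⟩ : PerDom s) : PerQuot s) = Quot.mk _ ⟨y', hy'⟩ := by
          rw [← heq, ← heq']
        exact quot_eq_s ⟨y, hy⟩ ⟨y', hy'⟩ this
      · intro hyy'
        have hy : s y y := hst hyy' (hss hyy')
        have hy' : s y' y' := hst (hss hyy') hyy'
        obtain ⟨a, ha⟩ := Quot.exists_rep (e.symm (Quot.mk _ ⟨y, hy⟩))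
        have he : e (Quot.mk _ a) = Quot.mk _ ⟨y, hy⟩ := by
          rw [ha]; exact e.apply_symm_apply _
        exact ⟨a.val, ⟨a.2, hy, he⟩, ⟨a.2, hy', he.trans (Quot.sound hyy')⟩⟩
end

section
/- Let G be the connected groupoid with 3 objects a, b, c and 9 morphisms (exactly one morphism between each ordered pair of objects), and let R be the partial identity relation on Mor(G) relating each morphism of G to itself except the two morphisms between a and c (which are related to nothing). Then R is a dagger idempotent in CP*[Rel] that does not dagger split in CP*[Rel]. -/
open CategoryTheory

/-- The morphism set of a groupoid. -/
def GrpMor (H : Type*) [Groupoid H] : Type _ := Σ X Y : H, X ⟶ Y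

/-- The inverse of a groupoid morphism. -/
def grpInv (H : Type*) [Groupoid H] (f : GrpMor H) : GrpMor H :=
  ⟨f.2.1, f.1, Groupoid.inv f.2.2⟩

/-- The identity on the domain of a groupoid morphism. -/
def grpIdDom (H : Type*) [Groupoid H] (f : GrpMor H) : GrpMor H :=
  ⟨f.1, f.1, 𝟙 f.1⟩

/-- Morphisms of the indiscrete (connected) groupoid on `Fin 3`: a pair `(i,j)`
is the unique morphism `i → j`; there are `3` objects and `9` morphisms. -/
abbrev IndMor : Type := Fin 3 × Fin 3

/-- Inverse in the indiscrete groupoid on `Fin 3`. -/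
def indInv (m : IndMor) : IndMor := (m.2, m.1)

/-- Identity on the domain in the indiscrete groupoid on `Fin 3`. -/
def indIdDom (m : IndMor) : IndMor := (m.1, m.1)

/-- The partial identity relation on the morphisms of the indiscrete groupoid
on `{a,b,c} = {0,1,2}` which omits the two morphisms between `a = 0` and
`c = 2`. -/
def Rrel : Rel IndMor IndMor := fun m m' => m = m' ∧ m ≠ (0, 2) ∧ m ≠ (2, 0)

/-- `R` is a dagger idempotent in `CP*[Rel]` (a morphism of `CP*[Rel]` from the
indiscrete groupoid on three objects to itself with `R† = R` and `R ∘ R = R`),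
but `R` does not dagger split in `CP*[Rel]`: there is no small groupoid `H` and
`CP*[Rel]`-morphism `S` with `S† ∘ S = R` and `S ∘ S† = id_H`. -/
theorem stmt5 :
    -- R is a morphism in CP*[Rel] (respects inverses and identities-of-domains)
    (∀ g h, Rrel g h → Rrel (indInv g) (indInv h) ∧ Rrel (indIdDom g) (indIdDom h)) ∧
    -- R is a dagger idempotent
    flip Rrel = Rrel ∧ Relation.Comp Rrel Rrel = Rrel ∧
    -- R does not dagger split
    ¬ ∃ (H : Type) (instH : Groupoid H) (S : Rel IndMor (@GrpMor H instH)),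
        (∀ g h, S g h →
          S (indInv g) (@grpInv H instH h) ∧ S (indIdDom g) (@grpIdDom H instH h)) ∧
        Relation.Comp S (flip S) = Rrel ∧
        Relation.Comp (flip S) S = (fun a b => a = b) := by
  refine ⟨?_, ?_, ?_, ?_⟩
  · rintro g h ⟨rfl, h1, h2⟩
    refine ⟨⟨rfl, ?_, ?_⟩, ⟨rfl, ?_, ?_⟩⟩ <;>
      [skip; skip; skip; skip] <;>
      · intro e
        rcases g with ⟨i, j⟩
        simp [indInv, indIdDom, Prod.ext_iff] at e
        first
          | exact h1 (by simp [Prod.ext_iff]; omega)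
          | exact h2 (by simp [Prod.ext_iff]; omega)
  · funext m m'
    simp only [flip, Rrel, eq_iff_iff]
    constructor <;> rintro ⟨rfl, a, b⟩ <;> exact ⟨rfl, a, b⟩
  · funext m m'
    simp only [Relation.Comp, Rrel, eq_iff_iff]
    constructor
    · rintro ⟨y, ⟨rfl, a, b⟩, ⟨rfl, _, _⟩⟩; exact ⟨rfl, a, b⟩
    · rintro ⟨rfl, a, b⟩; exact ⟨m, ⟨rfl, a, b⟩, ⟨rfl, a, b⟩⟩
  · rintro ⟨H, instH, S, hSmor, hSS, hSinv⟩
    have hfun : ∀ g h h', S g h → S g h' → h = h' := by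
      intro g h h' hg hg'
      have : Relation.Comp (flip S) S h h' := ⟨g, hg, hg'⟩
      rw [hSinv] at this; exact this
    have hinj : ∀ g g' h, S g h → S g' h → g = g' := by
      intro g g' h hg hg'
      have : Relation.Comp S (flip S) g g' := ⟨h, hg, hg'⟩
      rw [hSS] at this; exact this.1
    have hdom : ∀ g : IndMor, g ≠ (0, 2) → g ≠ (2, 0) → ∃ h, S g h := by
      intro g h1 h2
      have : Relation.Comp S (flip S) g g := by rw [hSS]; exact ⟨rfl, h1, h2⟩
      obtain ⟨h, hg, _⟩ := this
      exact ⟨h, hg⟩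
    obtain ⟨h01, hS01⟩ := hdom (0, 1) (by decide) (by decide)
    obtain ⟨h12, hS12⟩ := hdom (1, 2) (by decide) (by decide)
    -- S (1,0) (grpInv h01), S (1,1) (grpIdDom (grpInv h01))
    have hS10 : S (1, 0) (grpInv H h01) := (hSmor _ _ hS01).1
    have hS11 : S (1, 1) (grpIdDom H (grpInv H h01)) := (hSmor _ _ hS10).2
    have hS11' : S (1, 1) (grpIdDom H h12) := (hSmor _ _ hS12).2
    -- codomain of h01 equals domain of h12
    have hcod : h01.2.1 = h12.1 := by
      have := hfun _ _ _ hS11 hS11'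
      simpa [grpIdDom, grpInv] using congrArg Sigma.fst this
    -- build the composite morphism h01 ≫ h12 : X0 ⟶ X2
    set h : GrpMor H := ⟨h01.1, h12.2.1, h01.2.2 ≫ eqToHom hcod ≫ h12.2.2⟩ with hdef
    have hsurj : ∃ g, S g h := by
      have : Relation.Comp (flip S) S h h := by rw [hSinv]
      obtain ⟨g, hg, _⟩ := this
      exact ⟨g, hg⟩
    obtain ⟨g, hSg⟩ := hsurj
    have hgR : Rrel g g := by
      rw [← hSS]; exact ⟨h, hSg, hSg⟩
    -- first component of g is 0
    have hgd : S (indIdDom g) (grpIdDom H h) := (hSmor _ _ hSg).2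
    have hS00 : S (0, 0) (grpIdDom H h01) := (hSmor _ _ hS01).2
    have e1 : indIdDom g = (0, 0) := by
      refine hinj _ _ _ hgd ?_
      have : grpIdDom H h = grpIdDom H h01 := rfl
      rw [this]; exact hS00
    -- second component of g is 2
    have hS21 : S (2, 1) (grpInv H h12) := (hSmor _ _ hS12).1
    have hS22 : S (2, 2) (grpIdDom H (grpInv H h12)) := (hSmor _ _ hS21).2
    have hgci : S (indIdDom (indInv g)) (grpIdDom H (grpInv H h)) :=
      (hSmor _ _ (hSmor _ _ hSg).1).2
    have e2 : indIdDom (indInv g) = (2, 2) := by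
      refine hinj _ _ _ hgci ?_
      have : grpIdDom H (grpInv H h) = grpIdDom H (grpInv H h12) := rfl
      rw [this]; exact hS22
    have hg1 : g.1 = 0 := congrArg Prod.fst e1
    have hg2 : g.2 = 2 := congrArg Prod.fst e2
    exact hgR.2.1 (Prod.ext hg1 hg2)
end

section
/- Let A = M_n(ℂ), and let a ∈ A satisfy a ≥ 0, ‖a‖ > 1, and Tr(a) = Tr(a²). Define ρ = a/Tr(a) and p : A → A by p(x) = Tr(ρx)·a. Then p is self-adjoint with respect to the Hilbert–Schmidt inner product ⟨x,y⟩ = Tr(x†y), idempotent (p∘p = p), completely positive, but not contractive: its operator norm satisfies ‖p‖ = ‖a‖ > 1. -/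
open scoped Matrix Matrix.Norms.L2Operator ComplexOrder

lemma psdEqCt {n : ℕ} {a : Matrix (Fin n) (Fin n) ℂ} (ha : a.PosSemidef) :
    ∃ b : Matrix (Fin n) (Fin n) ℂ, a = bᴴ * b := by
  open scoped MatrixOrder in
  obtain ⟨b, hb⟩ := CStarAlgebra.nonneg_iff_eq_star_mul_self.mp ha.nonneg
  exact ⟨b, hb⟩

lemma kronPsd {k n : ℕ} {C : Matrix (Fin k) (Fin k) ℂ} {a : Matrix (Fin n) (Fin n) ℂ}
    (hC : C.PosSemidef) (ha : a.PosSemidef) :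
    (Matrix.of fun ir js : Fin k × Fin n => C ir.1 js.1 * a ir.2 js.2).PosSemidef := by
  obtain ⟨c, rfl⟩ := psdEqCt hC
  obtain ⟨b, rfl⟩ := psdEqCt ha
  have h : (Matrix.of fun ir js : Fin k × Fin n => (cᴴ * c) ir.1 js.1 * (bᴴ * b) ir.2 js.2)
      = (Matrix.of fun qt js : Fin k × Fin n => c qt.1 js.1 * b qt.2 js.2)ᴴ
        * (Matrix.of fun qt js : Fin k × Fin n => c qt.1 js.1 * b qt.2 js.2) := by
    ext ⟨i, r⟩ ⟨j, s⟩
    simp only [Matrix.mul_apply, Matrix.conjTranspose_apply, Matrix.of_apply,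
      Fintype.sum_prod_type, star_mul']
    rw [Finset.sum_mul_sum]
    refine Finset.sum_congr rfl fun q _ => Finset.sum_congr rfl fun t _ => by ring
  rw [h]
  exact Matrix.posSemidef_conjTranspose_mul_self _

private lemma sum3comm {n : ℕ} (f : Fin n → Fin n → Fin n → ℂ) :
    (∑ u : Fin n, ∑ w : Fin n, ∑ q : Fin n, f q u w)
      = ∑ q : Fin n, ∑ u : Fin n, ∑ w : Fin n, f q u w :=
  (Finset.sum_congr rfl fun _ _ => Finset.sum_comm).trans Finset.sum_comm

lemma ampPsd {k n : ℕ} (g : Matrix (Fin n) (Fin n) ℂ)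
    (M : Matrix (Fin k × Fin n) (Fin k × Fin n) ℂ) (hM : M.PosSemidef) :
    (Matrix.of fun i j : Fin k =>
      ((gᴴ * g) * Matrix.of fun r s => M (i, r) (j, s)).trace).PosSemidef := by
  set F : Fin n → Matrix (Fin k) (Fin k × Fin n) ℂ :=
    fun q => Matrix.of fun i jw => if jw.1 = i then g q jw.2 else 0 with hF
  have h : (Matrix.of fun i j : Fin k =>
      ((gᴴ * g) * Matrix.of fun r s => M (i, r) (j, s)).trace)
      = ∑ q : Fin n, F q * M * (F q)ᴴ := by
    ext i j
    simp only [Matrix.sum_apply, Matrix.mul_apply, Matrix.trace, Matrix.diag,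
      Matrix.conjTranspose_apply, Matrix.of_apply, hF, Fintype.sum_prod_type,
      apply_ite (star : ℂ → ℂ), Finset.sum_mul, Finset.mul_sum, ite_mul, mul_ite,
      zero_mul, mul_zero, Finset.sum_ite_eq', Finset.mem_univ, if_true, star_zero]
    simp only [Finset.sum_ite_irrel, Finset.sum_const_zero, Finset.sum_ite_eq',
      Finset.mem_univ, if_true]
    rw [sum3comm (fun q u w => star (g q u) * g q w * M (i, w) (j, u))]
    exact Finset.sum_congr rfl fun q _ => Finset.sum_congr rfl fun u _ =>
      Finset.sum_congr rfl fun w _ => by ring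
  rw [h]
  exact Finset.sum_induction _ _ (fun x y hx hy => hx.add hy) .zero
    (fun q _ => hM.mul_mul_conjTranspose_same (F q))

/-- Let `a ∈ Mₙ(ℂ)` satisfy `a ≥ 0`, `‖a‖ > 1` (operator norm) and
`Tr a = Tr a²`.  With `ρ = a / Tr a`, the map `p(x) = Tr(ρ x) • a` is
self-adjoint for the Hilbert–Schmidt inner product, idempotent, completely
positive (all matrix amplifications preserve positive semidefiniteness), but
not contractive: its operator norm is `‖a‖ > 1`. -/
theorem stmt14 (n : ℕ) (a : Matrix (Fin n) (Fin n) ℂ)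
    (ha : a.PosSemidef) (hnorm : 1 < ‖a‖) (htr : a.trace = (a * a).trace)
    (ρ : Matrix (Fin n) (Fin n) ℂ) (hρ : ρ = (a.trace)⁻¹ • a)
    (p : Matrix (Fin n) (Fin n) ℂ → Matrix (Fin n) (Fin n) ℂ)
    (hp : ∀ x, p x = ((ρ * x).trace) • a) :
    -- self-adjoint w.r.t. ⟪x, y⟫ = Tr (xᴴ y)
    (∀ x y, ((p x)ᴴ * y).trace = (xᴴ * p y).trace) ∧
    -- idempotent
    (∀ x, p (p x) = p x) ∧
    -- completely positive: every amplification preserves positivity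
    (∀ (k : ℕ) (M : Matrix (Fin k × Fin n) (Fin k × Fin n) ℂ),
      M.PosSemidef →
      Matrix.PosSemidef (Matrix.of (fun (ir js : Fin k × Fin n) =>
        p (Matrix.of (fun r s => M (ir.1, r) (js.1, s))) ir.2 js.2))) ∧
    -- operator norm is ‖a‖ > 1, so p is not contractive
    (∀ x, ‖p x‖ ≤ ‖a‖ * ‖x‖) ∧ (∃ x, ‖x‖ = 1 ∧ ‖p x‖ = ‖a‖) := by
  -- the trace of `a` is a positive real number `R`
  have ha0 : a ≠ 0 := by
    rintro rfl
    simp only [norm_zero] at hnorm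
    linarith
  set R : ℝ := ∑ i, ∑ j, Complex.normSq (a j i) with hR
  have htR : a.trace = (R : ℂ) := by
    rw [htr]
    nth_rewrite 1 [← ha.1]
    simp only [Matrix.trace, Matrix.diag, Matrix.mul_apply, Matrix.conjTranspose_apply, hR]
    push_cast
    refine Finset.sum_congr rfl fun i _ => Finset.sum_congr rfl fun j _ => ?_
    rw [Complex.normSq_eq_conj_mul_self, Complex.star_def]
  have hRpos : 0 < R := by
    rcases lt_or_eq_of_le (Finset.sum_nonneg fun i _ =>
      Finset.sum_nonneg fun j _ => Complex.normSq_nonneg (a j i)) with h | h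
    · exact h
    · exfalso
      apply ha0
      ext i j
      have := (Finset.sum_eq_zero_iff_of_nonneg fun i _ =>
        Finset.sum_nonneg fun j _ => Complex.normSq_nonneg (a j i)).mp h.symm j (Finset.mem_univ j)
      have := (Finset.sum_eq_zero_iff_of_nonneg fun j' _ =>
        Complex.normSq_nonneg (a j' j)).mp this i (Finset.mem_univ i)
      simpa using Complex.normSq_eq_zero.mp this
  have htne : a.trace ≠ 0 := by rw [htR]; exact_mod_cast hRpos.ne'
  have hρtr : ρ.trace = 1 := by
    rw [hρ, Matrix.trace_smul, smul_eq_mul, inv_mul_cancel₀ htne]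
  have hρa : (ρ * a).trace = 1 := by
    rw [hρ, Matrix.smul_mul, Matrix.trace_smul, smul_eq_mul, ← htr, inv_mul_cancel₀ htne]
  have htconj : star a.trace = a.trace := by
    rw [← Matrix.trace_conjTranspose, ha.1]
  have hρH : ρᴴ = ρ := by
    rw [hρ, Matrix.conjTranspose_smul, ha.1, star_inv₀, htconj]
  -- square root `g` of `ρ`
  obtain ⟨b, hb⟩ := psdEqCt ha
  set g : Matrix (Fin n) (Fin n) ℂ := ((Real.sqrt R⁻¹ : ℝ) : ℂ) • b with hg
  have hgg : gᴴ * g = ρ := by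
    rw [hg, Matrix.conjTranspose_smul, Matrix.smul_mul, Matrix.mul_smul, smul_smul, ← hb,
      Complex.star_def, Complex.conj_ofReal, ← Complex.ofReal_mul,
      Real.mul_self_sqrt (inv_nonneg.mpr hRpos.le), hρ, htR]
    push_cast
    rfl
  refine ⟨?_, ?_, ?_, ?_, ?_⟩
  · -- self-adjoint
    intro x y
    rw [hp x, hp y, Matrix.conjTranspose_smul, Matrix.smul_mul, Matrix.mul_smul,
      Matrix.trace_smul, Matrix.trace_smul, smul_eq_mul, smul_eq_mul]
    have h1 : star ((ρ * x).trace) = (xᴴ * ρ).trace := by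
      rw [← Matrix.trace_conjTranspose, Matrix.conjTranspose_mul, hρH]
    rw [h1, hρ]
    simp only [Matrix.smul_mul, Matrix.mul_smul, Matrix.trace_smul, smul_eq_mul, ha.1]
    rw [Matrix.IsHermitian.eq ha.1]
    ring
  · -- idempotent
    intro x
    rw [hp x, hp ((ρ * x).trace • a), Matrix.mul_smul, Matrix.trace_smul, hρa,
      smul_eq_mul, mul_one]
  · -- completely positive
    intro k M hM
    have hEq : (Matrix.of (fun (ir js : Fin k × Fin n) =>
        p (Matrix.of (fun r s => M (ir.1, r) (js.1, s))) ir.2 js.2))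
        = Matrix.of fun ir js : Fin k × Fin n =>
            (Matrix.of fun i j : Fin k =>
              ((gᴴ * g) * Matrix.of fun r s => M (i, r) (j, s)).trace) ir.1 js.1
            * a ir.2 js.2 := by
      ext ⟨i, r⟩ ⟨j, s⟩
      simp [hp, hgg, Matrix.smul_apply, smul_eq_mul]
    rw [hEq]
    exact kronPsd (ampPsd g M hM) ha
  · -- norm bound
    intro x
    rw [hp x, norm_smul]
    rw [mul_comm ‖a‖ ‖x‖]
    refine mul_le_mul_of_nonneg_right ?_ (norm_nonneg a)
    -- ‖(ρ * x).trace‖ ≤ ‖x‖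
    set v : Fin n → Fin n → ℂ := fun q u => star (g q u) with hv
    set V : Fin n → EuclideanSpace ℂ (Fin n) := fun q => (WithLp.equiv 2 _).symm (v q) with hV
    have htrace : (ρ * x).trace = ∑ q : Fin n, dotProduct (star (v q)) (x *ᵥ v q) := by
      rw [← hgg]
      simp only [Matrix.trace, Matrix.diag, Matrix.mul_apply, Matrix.conjTranspose_apply,
        dotProduct, Matrix.mulVec, hv, Finset.sum_mul, Finset.mul_sum, Pi.star_apply,
        star_star]
      rw [sum3comm (fun q u w => star (g q u) * g q w * x w u)]
      refine Finset.sum_congr rfl fun q _ => ?_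
      rw [Finset.sum_comm]
      exact Finset.sum_congr rfl fun u _ => Finset.sum_congr rfl fun w _ => by ring
    have hsum : ∑ q : Fin n, ‖V q‖ ^ 2 = 1 := by
      have key : ∀ q : Fin n, ((‖V q‖ ^ 2 : ℝ) : ℂ) = ∑ u : Fin n, star (g q u) * g q u := by
        intro q
        have h3 : ‖V q‖ ^ 2 = ∑ u : Fin n, Complex.normSq (g q u) := by
          rw [EuclideanSpace.norm_eq, Real.sq_sqrt (Finset.sum_nonneg fun u _ => sq_nonneg _)]
          refine Finset.sum_congr rfl fun u _ => ?_
          simp [hV, hv, Complex.sq_norm]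
        rw [h3]
        push_cast
        refine Finset.sum_congr rfl fun u _ => ?_
        rw [Complex.normSq_eq_conj_mul_self, Complex.star_def]
      have h2 : ((∑ q : Fin n, ‖V q‖ ^ 2 : ℝ) : ℂ) = ρ.trace := by
        rw [← hgg]
        simp only [Matrix.trace, Matrix.diag, Matrix.mul_apply, Matrix.conjTranspose_apply]
        push_cast
        rw [Finset.sum_comm]
        exact Finset.sum_congr rfl fun q _ => by rw [← key q]; push_cast; ring
      rw [hρtr] at h2
      exact_mod_cast h2
    calc ‖(ρ * x).trace‖ = ‖∑ q : Fin n, dotProduct (star (v q)) (x *ᵥ v q)‖ := by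
          rw [htrace]
      _ ≤ ∑ q : Fin n, ‖dotProduct (star (v q)) (x *ᵥ v q)‖ := norm_sum_le _ _
      _ ≤ ∑ q : Fin n, ‖x‖ * ‖V q‖ ^ 2 := by
          refine Finset.sum_le_sum fun q _ => ?_
          have hip : dotProduct (star (v q)) (x *ᵥ v q)
              = (inner ℂ (V q) ((EuclideanSpace.equiv (Fin n) ℂ).symm (x *ᵥ v q)) : ℂ) := by
              rw [hV]; simp [PiLp.inner_apply, dotProduct, mul_comm]
          rw [hip]
          calc ‖(inner ℂ (V q) ((EuclideanSpace.equiv (Fin n) ℂ).symm (x *ᵥ v q)) : ℂ)‖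
              ≤ ‖V q‖ * ‖(EuclideanSpace.equiv (Fin n) ℂ).symm (x *ᵥ v q)‖ :=
                norm_inner_le_norm _ _
            _ ≤ ‖V q‖ * (‖x‖ * ‖V q‖) := by
                refine mul_le_mul_of_nonneg_left ?_ (norm_nonneg _)
                exact Matrix.l2_opNorm_mulVec x (V q)
            _ = ‖x‖ * ‖V q‖ ^ 2 := by ring
      _ = ‖x‖ * ∑ q : Fin n, ‖V q‖ ^ 2 := by rw [Finset.mul_sum]
      _ = ‖x‖ := by rw [hsum, mul_one]
  · -- the identity witnesses the norm
    have hn : n ≠ 0 := by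
      rintro rfl
      rw [Subsingleton.elim a 0, norm_zero] at hnorm
      linarith
    haveI : NeZero n := ⟨hn⟩
    refine ⟨1, ?_, ?_⟩
    · exact CStarRing.norm_one
    · rw [hp 1, mul_one, hρtr, one_smul]
end

section
/- Let p : M_m(ℂ) → M_m(ℂ) be a unital completely positive projection (p = p† = p∘p, p(1) = 1). Then the range p(M_m) is a C*-algebra under the Choi–Effros product (a,b) ↦ p(ab), with the same involution and with unit 1. -/
open scoped Matrix Matrix.Norms.L2Operator ComplexOrder


/-- Any Hermitian complex matrix is a difference of two positive semidefinite matrices. -/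
lemma aux_decomp {n : ℕ} (h : Matrix (Fin n) (Fin n) ℂ) (hh : h.IsHermitian) :
    ∃ A B : Matrix (Fin n) (Fin n) ℂ, A.PosSemidef ∧ B.PosSemidef ∧ h = A - B := by
  classical
  set U : Matrix (Fin n) (Fin n) ℂ := (hh.eigenvectorUnitary : Matrix (Fin n) (Fin n) ℂ)
  refine ⟨U * Matrix.diagonal (fun i => ((max (hh.eigenvalues i) 0 : ℝ) : ℂ)) * star U,
         U * Matrix.diagonal (fun i => ((max (-hh.eigenvalues i) 0 : ℝ) : ℂ)) * star U, ?_, ?_, ?_⟩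
  · have hd : (Matrix.diagonal (fun i => ((max (hh.eigenvalues i) 0 : ℝ) : ℂ))).PosSemidef :=
      Matrix.PosSemidef.diagonal fun i => by
        simpa using Complex.zero_le_real.mpr (le_max_right _ _)
    simpa [Matrix.star_eq_conjTranspose, mul_assoc] using hd.mul_mul_conjTranspose_same U
  · have hd : (Matrix.diagonal (fun i => ((max (-hh.eigenvalues i) 0 : ℝ) : ℂ))).PosSemidef :=
      Matrix.PosSemidef.diagonal fun i => by
        simpa using Complex.zero_le_real.mpr (le_max_right _ _)
    simpa [Matrix.star_eq_conjTranspose, mul_assoc] using hd.mul_mul_conjTranspose_same U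
  · have hspec := hh.spectral_theorem
    rw [← Matrix.sub_mul, ← Matrix.mul_sub, Matrix.diagonal_sub]
    have hfun : (fun i => ((max (hh.eigenvalues i) 0 : ℝ) : ℂ) - ((max (-hh.eigenvalues i) 0 : ℝ) : ℂ))
        = RCLike.ofReal ∘ hh.eigenvalues := by
      funext i
      rw [← Complex.ofReal_sub, max_zero_sub_max_neg_zero_eq_self]
      rfl
    rw [hfun]
    exact hspec

/-- A positive semidefinite complex matrix with zero trace is zero. -/
lemma aux_faithful {n : ℕ} (d : Matrix (Fin n) (Fin n) ℂ) (hd : d.PosSemidef)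
    (ht : d.trace = 0) : d = 0 := by
  classical
  obtain ⟨s, hs, hss⟩ : ∃ s : Matrix (Fin n) (Fin n) ℂ, s.IsHermitian ∧ sᴴ * s = d :=
    by
      open MatrixOrder in
      obtain ⟨X, hX, -, hXX⟩ :=
        CFC.exists_sqrt_of_isSelfAdjoint_of_quasispectrumRestricts hd.isHermitian
          (QuasispectrumRestricts.nnreal_of_nonneg hd.nonneg)
      exact ⟨X, hX, by rw [show Xᴴ = X from hX, hXX]⟩
  have htr : ((∑ j, ∑ i, Complex.normSq (s i j) : ℝ) : ℂ) = 0 := by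
    rw [← ht, ← hss, Matrix.trace]
    push_cast
    refine Finset.sum_congr rfl fun j _ => ?_
    simp only [Matrix.diag_apply, Matrix.mul_apply, Matrix.conjTranspose_apply]
    refine Finset.sum_congr rfl fun i _ => ?_
    rw [Complex.normSq_eq_conj_mul_self]
    rfl
  have htr' : (∑ j, ∑ i, Complex.normSq (s i j) : ℝ) = 0 := by exact_mod_cast htr
  have hzero : s = 0 := by
    ext i j
    have h1 : ∀ j ∈ Finset.univ, (0:ℝ) ≤ ∑ i, Complex.normSq (s i j) :=
      fun j _ => Finset.sum_nonneg fun i _ => Complex.normSq_nonneg _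
    have h2 := (Finset.sum_eq_zero_iff_of_nonneg h1).mp htr' j (Finset.mem_univ j)
    have h3 := (Finset.sum_eq_zero_iff_of_nonneg
      (fun i _ => Complex.normSq_nonneg (s i j))).mp h2 i (Finset.mem_univ i)
    simpa [Complex.normSq_eq_zero] using h3
  rw [← hss, hzero]
  simp

/-- Choi–Effros for matrix algebras: if `p : M_m(ℂ) → M_m(ℂ)` is a unital
completely positive projection (`p = p† = p ∘ p`, `p 1 = 1`, with `p†` the
adjoint for the Hilbert–Schmidt inner product), then the range of `p` is a
C*-algebra under the Choi–Effros product `(a, b) ↦ p (a * b)`, with the same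
involution, the same (operator) norm, and unit `1`. -/
theorem stmt15 (m : ℕ)
    (p : Matrix (Fin m) (Fin m) ℂ →ₗ[ℂ] Matrix (Fin m) (Fin m) ℂ)
    -- p is self-adjoint w.r.t. ⟪x, y⟫ = Tr (xᴴ y)
    (hsa : ∀ x y, ((p x)ᴴ * y).trace = (xᴴ * p y).trace)
    -- p is idempotent
    (hidem : ∀ x, p (p x) = p x)
    -- p is completely positive
    (hcp : ∀ (k : ℕ) (M : Matrix (Fin k × Fin m) (Fin k × Fin m) ℂ),
      M.PosSemidef →
      Matrix.PosSemidef (Matrix.of (fun (ir js : Fin k × Fin m) =>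
        p (Matrix.of (fun r s => M (ir.1, r) (js.1, s))) ir.2 js.2)))
    -- p is unital
    (hunital : p 1 = 1) :
    -- the range of p is a C*-algebra under the product (a, b) ↦ p (a * b):
    (1 : Matrix (Fin m) (Fin m) ℂ) ∈ Set.range p ∧
    (∀ x ∈ Set.range p, xᴴ ∈ Set.range p) ∧
    (∀ x ∈ Set.range p, ∀ y ∈ Set.range p, p (x * y) ∈ Set.range p) ∧
    -- associativity of the Choi–Effros product
    (∀ x ∈ Set.range p, ∀ y ∈ Set.range p, ∀ z ∈ Set.range p,
      p (p (x * y) * z) = p (x * p (y * z))) ∧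
    -- 1 is the unit for the Choi–Effros product
    (∀ x ∈ Set.range p, p (1 * x) = x ∧ p (x * 1) = x) ∧
    -- the involution is an anti-homomorphism for the Choi–Effros product
    (∀ x ∈ Set.range p, ∀ y ∈ Set.range p, (p (x * y))ᴴ = p (yᴴ * xᴴ)) ∧
    -- the C*-identity holds for the operator norm
    (∀ x ∈ Set.range p, ‖p (xᴴ * x)‖ = ‖x‖ ^ 2) := by
  classical
  -- fixed points of p are exactly the range
  have hfixed : ∀ x : Matrix (Fin m) (Fin m) ℂ, x ∈ Set.range p → p x = x := by
    rintro x ⟨a, rfl⟩; exact hidem a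
  -- p is trace preserving
  have htr : ∀ y : Matrix (Fin m) (Fin m) ℂ, (p y).trace = y.trace := by
    intro y
    have := hsa 1 y
    simp only [hunital, Matrix.conjTranspose_one, Matrix.one_mul] at this
    exact this.symm
  -- p preserves positive semidefiniteness
  have hpsd : ∀ M : Matrix (Fin m) (Fin m) ℂ, M.PosSemidef → (p M).PosSemidef := by
    intro M hM
    have h1 := hcp 1 (M.submatrix Prod.snd Prod.snd) (hM.submatrix Prod.snd)
    have h2 := h1.submatrix (fun r : Fin m => ((0 : Fin 1), r))
    convert h2 using 1
    ext i j; rfl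
  -- p preserves hermitianness
  have hherm : ∀ h : Matrix (Fin m) (Fin m) ℂ, h.IsHermitian → (p h).IsHermitian := by
    intro h hh
    obtain ⟨A, B, hA, hB, hAB⟩ := aux_decomp h hh
    rw [hAB, map_sub]
    exact (hpsd A hA).1.sub (hpsd B hB).1
  -- p is star preserving
  have hstar : ∀ x : Matrix (Fin m) (Fin m) ℂ, p xᴴ = (p x)ᴴ := by
    intro x
    have ha : (x + xᴴ).IsHermitian := by
      simp only [Matrix.IsHermitian, Matrix.conjTranspose_add, Matrix.conjTranspose_conjTranspose]
      exact add_comm _ _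
    have hb : (Complex.I • (xᴴ - x)).IsHermitian := by
      simp only [Matrix.IsHermitian, Matrix.conjTranspose_smul, Matrix.conjTranspose_sub,
        Matrix.conjTranspose_conjTranspose, Complex.star_def, Complex.conj_I, neg_smul]
      rw [← smul_neg, neg_sub]
    have ha2 := hherm _ ha
    have hb2 := hherm _ hb
    rw [Matrix.IsHermitian, map_add, Matrix.conjTranspose_add] at ha2
    rw [Matrix.IsHermitian, map_smul, map_sub, Matrix.conjTranspose_smul,
      Matrix.conjTranspose_sub, Complex.star_def, Complex.conj_I] at hb2
    -- hb2 : (-I) • ((p xᴴ)ᴴ - (p x)ᴴ) = I • (p xᴴ - p x)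
    have hb3 := congrArg (fun M : Matrix (Fin m) (Fin m) ℂ => Complex.I • M) hb2
    simp only [smul_smul, mul_neg, neg_mul, Complex.I_mul_I, neg_neg, one_smul] at hb3
    -- hb3 : (p xᴴ)ᴴ - (p x)ᴴ = -(I*I) • (p xᴴ - p x) = p x - p xᴴ (up to signs)
    linear_combination (norm := module) (-((2:ℂ))⁻¹) • ha2 + ((2:ℂ))⁻¹ • hb3
  have hsfix : ∀ x : Matrix (Fin m) (Fin m) ℂ, p x = x → p xᴴ = xᴴ := by
    intro x hx; rw [hstar, hx]
  -- Schwarz inequality at fixed points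
  have hschwarz : ∀ x : Matrix (Fin m) (Fin m) ℂ, p x = x →
      (p (xᴴ * x) - xᴴ * x).PosSemidef := by
    intro x hx
    have hxs := hsfix x hx
    set F : Matrix (Fin m ⊕ Fin m) (Fin m ⊕ Fin m) ℂ :=
      Matrix.fromBlocks 1 x xᴴ (xᴴ * x) with hF
    have hFps : F.PosSemidef := by
      have h : F = (Matrix.fromBlocks 1 x 0 0)ᴴ * (Matrix.fromBlocks 1 x 0 0) := by
        simp [hF, Matrix.fromBlocks_conjTranspose, Matrix.fromBlocks_multiply]
      rw [h]
      exact Matrix.posSemidef_conjTranspose_mul_self _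
    set g : Fin 2 × Fin m → Fin m ⊕ Fin m :=
      fun ir => if ir.1 = 0 then Sum.inl ir.2 else Sum.inr ir.2 with hg
    have hQ := hcp 2 (F.submatrix g g) (hFps.submatrix g)
    set Q : Matrix (Fin 2 × Fin m) (Fin 2 × Fin m) ℂ :=
      Matrix.of (fun ir js : Fin 2 × Fin m =>
        p (Matrix.of (fun r s => (F.submatrix g g) (ir.1, r) (js.1, s))) ir.2 js.2) with hQdef
    set g' : Fin m ⊕ Fin m → Fin 2 × Fin m :=
      Sum.elim (fun r => ((0 : Fin 2), r)) (fun r => ((1 : Fin 2), r)) with hg'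
    have hQ'ps : (Q.submatrix g' g').PosSemidef := hQ.submatrix g'
    have k00 : (Matrix.of fun a b => (F.submatrix g g) ((0:Fin 2), a) ((0:Fin 2), b))
        = (1 : Matrix (Fin m) (Fin m) ℂ) := by
      ext a b; simp [hg, hF]
    have k01 : (Matrix.of fun a b => (F.submatrix g g) ((0:Fin 2), a) ((1:Fin 2), b)) = x := by
      ext a b; simp [hg, hF]
    have k10 : (Matrix.of fun a b => (F.submatrix g g) ((1:Fin 2), a) ((0:Fin 2), b)) = xᴴ := by
      ext a b; simp [hg, hF]
    have k11 : (Matrix.of fun a b => (F.submatrix g g) ((1:Fin 2), a) ((1:Fin 2), b))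
        = xᴴ * x := by
      ext a b; simp [hg, hF]
    have hQ' : Q.submatrix g' g' = Matrix.fromBlocks 1 x xᴴ (p (xᴴ * x)) := by
      ext rs st
      rcases rs with r | r <;> rcases st with s | s
      · show p (Matrix.of fun a b => (F.submatrix g g) ((0:Fin 2), a) ((0:Fin 2), b)) r s = _
        rw [k00, hunital]; rfl
      · show p (Matrix.of fun a b => (F.submatrix g g) ((0:Fin 2), a) ((1:Fin 2), b)) r s = _
        rw [k01, hx]; rfl
      · show p (Matrix.of fun a b => (F.submatrix g g) ((1:Fin 2), a) ((0:Fin 2), b)) r s = _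
        rw [k10, hxs]; rfl
      · show p (Matrix.of fun a b => (F.submatrix g g) ((1:Fin 2), a) ((1:Fin 2), b)) r s = _
        rw [k11]; rfl
    rw [hQ'] at hQ'ps
    set L : Matrix (Fin m ⊕ Fin m) (Fin m ⊕ Fin m) ℂ := Matrix.fromBlocks (-x) 0 1 0 with hL
    have hfin : (Lᴴ * Matrix.fromBlocks 1 x xᴴ (p (xᴴ * x)) * L).PosSemidef :=
      hQ'ps.conjTranspose_mul_mul_same L
    have hfin2 : Lᴴ * Matrix.fromBlocks 1 x xᴴ (p (xᴴ * x)) * L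
        = Matrix.fromBlocks (p (xᴴ * x) - xᴴ * x) 0 0 0 := by
      simp only [hL, Matrix.fromBlocks_conjTranspose, Matrix.fromBlocks_multiply]
      congr 1 <;> simp <;> try noncomm_ring
    rw [hfin2] at hfin
    have := hfin.submatrix Sum.inl
    convert this using 1
    ext i j; rfl
  -- multiplicativity on fixed points, first for xᴴ * x
  have hmul : ∀ x : Matrix (Fin m) (Fin m) ℂ, p x = x → p (xᴴ * x) = xᴴ * x := by
    intro x hx
    have hps := hschwarz x hx
    have htr0 : (p (xᴴ * x) - xᴴ * x).trace = 0 := by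
      rw [Matrix.trace_sub, htr]; ring
    exact sub_eq_zero.mp (aux_faithful _ hps htr0)
  -- polarization
  have hpol : ∀ x y : Matrix (Fin m) (Fin m) ℂ, p x = x → p y = y →
      p (xᴴ * y) = xᴴ * y := by
    intro x y hx hy
    have e1 := hmul (x + y) (by rw [map_add, hx, hy])
    have e2 := hmul (x + Complex.I • y) (by rw [map_add, map_smul, hx, hy])
    have exp1 : (x + y)ᴴ * (x + y) = xᴴ * x + xᴴ * y + yᴴ * x + yᴴ * y := by
      simp only [Matrix.conjTranspose_add, Matrix.add_mul, Matrix.mul_add]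
      abel
    have exp2 : (x + Complex.I • y)ᴴ * (x + Complex.I • y)
        = xᴴ * x + Complex.I • (xᴴ * y) - Complex.I • (yᴴ * x) + yᴴ * y := by
      simp only [Matrix.conjTranspose_add, Matrix.conjTranspose_smul, Complex.star_def,
        Complex.conj_I, Matrix.add_mul, Matrix.mul_add, Matrix.smul_mul, Matrix.mul_smul,
        smul_smul, neg_smul, neg_mul, Complex.I_mul_I, neg_neg, one_smul]
      match_scalars <;> simp [Complex.I_sq] <;> try ring
    rw [exp1, map_add, map_add, map_add, hmul x hx, hmul y hy] at e1
    rw [exp2, map_add, map_sub, map_add, map_smul, map_smul, hmul x hx, hmul y hy] at e2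
    have e3 := congrArg (fun M : Matrix (Fin m) (Fin m) ℂ => (-Complex.I) • M) e2
    simp only [smul_add, smul_sub, smul_smul, neg_mul, Complex.I_mul_I, neg_neg, one_smul] at e3
    linear_combination (norm := module) ((2:ℂ))⁻¹ • e1 + ((2:ℂ))⁻¹ • e3
  -- multiplicativity on fixed points
  have hprod : ∀ x y : Matrix (Fin m) (Fin m) ℂ, p x = x → p y = y →
      p (x * y) = x * y := by
    intro x y hx hy
    have := hpol xᴴ y (hsfix x hx) hy
    simpa using this
  refine ⟨⟨1, hunital⟩, ?_, ?_, ?_, ?_, ?_, ?_⟩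
  · rintro x ⟨a, rfl⟩
    exact ⟨(p a)ᴴ, by rw [hstar, hidem]⟩
  · intro x _ y _
    exact ⟨x * y, rfl⟩
  · intro x hx y hy z hz
    rw [hprod x y (hfixed x hx) (hfixed y hy), hprod y z (hfixed y hy) (hfixed z hz), mul_assoc]
  · intro x hx
    constructor
    · rw [one_mul]; exact hfixed x hx
    · rw [mul_one]; exact hfixed x hx
  · intro x hx y hy
    have hxf := hfixed x hx
    have hyf := hfixed y hy
    rw [hprod x y hxf hyf, hprod yᴴ xᴴ (hsfix y hyf) (hsfix x hxf), Matrix.conjTranspose_mul]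
  · intro x hx
    rw [hmul x (hfixed x hx), pow_two]
    exact Matrix.l2_opNorm_conjTranspose_mul_self x
end

section
/- In CP*[Rel] (groupoids and inverse-respecting relations), the one-object groupoid ℤ₂ is not isomorphic to any finite disjoint union of indiscrete groupoids. -/
/-- Morphisms of a disjoint union of indiscrete groupoids: one component for
each `i : ι`, with object set `O i`, and exactly one morphism `(x, y) : x → y`
between each ordered pair of objects of a component. -/
abbrev IndUnionMor (ι : Type) (O : ι → Type) : Type := Σ i : ι, O i × O i

/-- Inverse in a disjoint union of indiscrete groupoids. -/
def iuInv {ι : Type} {O : ι → Type} (f : IndUnionMor ι O) : IndUnionMor ι O :=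
  ⟨f.1, (f.2.2, f.2.1)⟩

/-- Identity on the domain in a disjoint union of indiscrete groupoids. -/
def iuIdDom {ι : Type} {O : ι → Type} (f : IndUnionMor ι O) : IndUnionMor ι O :=
  ⟨f.1, (f.2.1, f.2.1)⟩

/-- In `CP*[Rel]` (small groupoids with inverse-respecting relations between
morphism sets as morphisms), the one-object groupoid `ℤ₂` (morphism set
`ZMod 2`, inverse `g ↦ -g`, identity `0`) is not isomorphic to any finite
disjoint union of indiscrete groupoids: there are no inverse-respecting
relations `R`, `S` composing to the identities on both sides. -/
theorem stmt19 :
    ¬ ∃ (ι : Type) (_ : Finite ι) (O : ι → Type)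
      (R : Rel (ZMod 2) (IndUnionMor ι O)) (S : Rel (IndUnionMor ι O) (ZMod 2)),
      (∀ g h, R g h → R (-g) (iuInv h) ∧ R 0 (iuIdDom h)) ∧
      (∀ h g, S h g → S (iuInv h) (-g) ∧ S (iuIdDom h) 0) ∧
      Relation.Comp R S = (fun a b : ZMod 2 => a = b) ∧
      Relation.Comp S R = (fun a b : IndUnionMor ι O => a = b) := by
  rintro ⟨ι, _, O, R, S, hR, hS, hRS, hSR⟩
  have h1 : Relation.Comp R S 1 1 := by rw [hRS]
  obtain ⟨h, hR1, hS1⟩ := h1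
  have hinv : R 1 (iuInv h) := by
    have := (hR 1 h hR1).1
    simpa using this
  have heq : h = iuInv h := by
    have : Relation.Comp S R h (iuInv h) := ⟨1, hS1, hinv⟩
    rw [hSR] at this
    exact this
  have hid : iuIdDom h = h := by
    obtain ⟨i, a, b⟩ := h
    simp only [iuInv, Sigma.mk.inj_iff, heq_eq_eq, Prod.mk.injEq] at heq
    simp only [iuIdDom]
    rw [heq.2.1]
  have hS0 : S h 0 := by
    have := (hS h 1 hS1).2
    rwa [hid] at this
  have : Relation.Comp R S 1 0 := ⟨h, hR1, hS0⟩
  rw [hRS] at this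
  exact one_ne_zero this
end
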